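/- Let L > 0, let (ρ*, u₁*, u₂*) ∈ C¹ on the closure of N⁺_{L,f} with ∂₁(ρ*u₁*) + ∂₂(ρ*u₂*) = 0 in N⁺_{L,f}, ρ*u₁* > 0, and ρ*u₂* = 0 on {x₂ = 1}, and let f ∈ C¹([0,L]), f : [0,L] → (−1,1), satisfy the mass-flux identity ∫₀¹ ρ*u₁*(0,t) dt = ∫_{f(x₁)}^1 ρ*u₁*(x₁,t) dt for all x₁ ∈ [0,L], together with f(0) = 0. Then f satisfies the free boundary ODE f'(x₁) = (u₂*/u₁*)(x₁, f(x₁)) for 0 < x₁ < L. -/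

import Mathlib

/- Common setting: 2-d steady compressible Euler flows in infinitely long nozzles,
   Hölder norms, Helmholtz decomposition nonlinearities. -/

noncomputable section

open Set MeasureTheory Filter

/-- Points of the plane. -/
abbrev V2 := ℝ × ℝ

/-- Euclidean dot product on `ℝ²`. -/
def dot (a b : V2) : ℝ := a.1 * b.1 + a.2 * b.2

/-- Euclidean norm on `ℝ²`. -/
def enorm2 (a : V2) : ℝ := Real.sqrt (dot a a)

/-- `r^⊥ = (r₂, -r₁)`. -/
def perp (r : V2) : V2 := (r.2, -r.1)

/-- Partial derivative `∂₁` (within a set `D`). -/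
def pd1W (D : Set V2) (f : V2 → ℝ) (x : V2) : ℝ := fderivWithin ℝ f D x ((1 : ℝ), (0 : ℝ))

/-- Partial derivative `∂₂` (within a set `D`). -/
def pd2W (D : Set V2) (f : V2 → ℝ) (x : V2) : ℝ := fderivWithin ℝ f D x ((0 : ℝ), (1 : ℝ))

/-- Second partial derivative `∂₁₁` (within a set `D`). -/
def pd11W (D : Set V2) (f : V2 → ℝ) (x : V2) : ℝ := pd1W D (pd1W D f) x

/-- Second partial derivative `∂₂₂` (within a set `D`). -/
def pd22W (D : Set V2) (f : V2 → ℝ) (x : V2) : ℝ := pd2W D (pd2W D f) x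

/-- Gradient `∇f` (within a set `D`). -/
def gradW (D : Set V2) (f : V2 → ℝ) (x : V2) : V2 := (pd1W D f x, pd2W D f x)

/-- Orthogonal gradient `∇^⊥ f = (∂₂ f, -∂₁ f)` (within a set `D`). -/
def pgradW (D : Set V2) (f : V2 → ℝ) (x : V2) : V2 := (pd2W D f x, -(pd1W D f x))

/-- Divergence of a planar vector field (derivatives within `D`). -/
def div2W (D : Set V2) (F : V2 → V2) (x : V2) : ℝ :=
  pd1W D (fun y => (F y).1) x + pd2W D (fun y => (F y).2) x

/-- Laplacian (within a set `D`). -/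
def lapW (D : Set V2) (f : V2 → ℝ) (x : V2) : ℝ := div2W D (gradW D f) x

/-- Hölder seminorm of order `k`, exponent `α`, over `D ⊆ ℝ²`. -/
def holderSemi (α : ℝ) (k : ℕ) (D : Set V2) (f : V2 → ℝ) : ℝ :=
  sSup {c | ∃ x ∈ D, ∃ y ∈ D, x ≠ y ∧
    c = ‖iteratedFDerivWithin ℝ k f (closure D) x - iteratedFDerivWithin ℝ k f (closure D) y‖
        / enorm2 (x - y) ^ α}

/-- `C^{k,α}` Hölder norm over `D ⊆ ℝ²`. -/
def hNorm (k : ℕ) (α : ℝ) (D : Set V2) (f : V2 → ℝ) : ℝ :=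
  (∑ i ∈ Finset.range (k + 1),
    sSup ((fun x => ‖iteratedFDerivWithin ℝ i f (closure D) x‖) '' D))
  + holderSemi α k D f

/-- Hölder seminorm of order `k`, exponent `α`, over `D ⊆ ℝ` (one-dimensional). -/
def holderSemi1 (α : ℝ) (k : ℕ) (D : Set ℝ) (f : ℝ → ℝ) : ℝ :=
  sSup {c | ∃ x ∈ D, ∃ y ∈ D, x ≠ y ∧
    c = |iteratedDerivWithin k f (closure D) x - iteratedDerivWithin k f (closure D) y|
        / |x - y| ^ α}

/-- `C^{k,α}` Hölder norm over `D ⊆ ℝ` (one-dimensional). -/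
def hNorm1 (k : ℕ) (α : ℝ) (D : Set ℝ) (f : ℝ → ℝ) : ℝ :=
  (∑ i ∈ Finset.range (k + 1),
    sSup ((fun x => |iteratedDerivWithin i f (closure D) x|) '' D))
  + holderSemi1 α k D f

/-- The infinite nozzle `N = {x₁ > 0, -1 < x₂ < 1}`. -/
def Noz : Set V2 := {x | 0 < x.1 ∧ -1 < x.2 ∧ x.2 < 1}

/-- `N ∩ {x₂ > g(x₁)}`. -/
def NozG (g : ℝ → ℝ) : Set V2 := {x | 0 < x.1 ∧ g x.1 < x.2 ∧ x.2 < 1}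

/-- Cut-off nozzle `N_L`. -/
def NozL (L : ℝ) : Set V2 := {x | 0 < x.1 ∧ x.1 < L ∧ -1 < x.2 ∧ x.2 < 1}

/-- `N_L ∩ {x₂ > f(x₁)}`. -/
def NozLF (L : ℝ) (f : ℝ → ℝ) : Set V2 := {x | 0 < x.1 ∧ x.1 < L ∧ f x.1 < x.2 ∧ x.2 < 1}

/-- Bernoulli invariant `B = |u|²/2 + γ p/((γ-1) ρ)`. -/
def Bern (γ : ℝ) (u : V2 → V2) (ρ p : V2 → ℝ) (x : V2) : ℝ :=
  dot (u x) (u x) / 2 + γ * p x / ((γ - 1) * ρ x)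

/-- The steady Euler system, pointwise (derivatives taken within `D`). -/
def EulerAt (γ : ℝ) (D : Set V2) (u : V2 → V2) (ρ p : V2 → ℝ) (x : V2) : Prop :=
  div2W D (fun y => ρ y • u y) x = 0 ∧
  div2W D (fun y => (ρ y * (u y).1) • u y + p y • ((1 : ℝ), (0 : ℝ))) x = 0 ∧
  div2W D (fun y => (ρ y * (u y).2) • u y + p y • ((0 : ℝ), (1 : ℝ))) x = 0 ∧
  div2W D (fun y => (ρ y * Bern γ u ρ p y) • u y) x = 0

/-- Unit tangent `τ = (1, d)/√(1+d²)` to a graph with slope `d`. -/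
def tauv (d : ℝ) : V2 := (Real.sqrt (1 + d ^ 2))⁻¹ • ((1 : ℝ), d)

/-- Unit normal `n = (-d, 1)/√(1+d²)` to a graph with slope `d`. -/
def normv (d : ℝ) : V2 := (Real.sqrt (1 + d ^ 2))⁻¹ • ((-d : ℝ), (1 : ℝ))

/-- Density function `H(ξ, q, r)` of the Helmholtz decomposition. -/
def Hfun (γ B ξ : ℝ) (q r : V2) : ℝ :=
  ((γ - 1) * (B - dot (q + perp r) (q + perp r) / 2) / (γ * ξ)) ^ (1 / (γ - 1))

/-- Momentum field `𝔽(ξ, q, r) = H(ξ,q,r)(q + r^⊥)`. -/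
def Ffun (γ B ξ : ℝ) (q r : V2) : V2 := Hfun γ B ξ q r • (q + perp r)

/-- Source term `G(ξ, η, q, r) = -η H^{γ-1}/((γ-1)(q₁+r₂))`. -/
def Gfun (γ B ξ η : ℝ) (q r : V2) : ℝ :=
  -(η * Hfun γ B ξ q r ^ (γ - 1)) / ((γ - 1) * (q.1 + r.2))

/-- `𝒜(f, S)` evaluated with entropy value `s` and slope `d` of the free boundary. -/
def Aval (γ B p₀ u₀ s d : ℝ) : ℝ :=
  Real.sqrt (2 * (B - γ * p₀ ^ (1 - 1 / γ) * s ^ (1 / γ) / (γ - 1)))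
    - u₀ / Real.sqrt (1 + d ^ 2)

/-- The Helmholtz-decomposed system, pointwise (derivatives within `D`). -/
def HelmAt (γ B : ℝ) (D : Set V2) (S φ ψ : V2 → ℝ) (x : V2) : Prop :=
  div2W D (fun y => Ffun γ B (S y) (gradW D φ y) (gradW D ψ y)) x = 0 ∧
  lapW D ψ x = Gfun γ B (S x) (pd2W D S x) (gradW D φ x) (gradW D ψ x) ∧
  Hfun γ B (S x) (gradW D φ x) (gradW D ψ x) *
    dot (gradW D φ x + pgradW D ψ x) (gradW D S x) = 0

/-- Assumptions on the boundary data `(S_en, v_en)`: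
`(S_en, v_en) ≡ (S₀⁻, 0)` on `Γ_en \ Γ_en⁺` and `v_en ≡ 0` on `Γ_en^ε`. -/
def DataOK (S0m ε : ℝ) (Sen ven : ℝ → ℝ) : Prop :=
  (∀ t : ℝ, -1 ≤ t → t < 0 → Sen t = S0m ∧ ven t = 0) ∧
  (∀ t ∈ Icc (0 : ℝ) 1, (t ≤ ε ∨ 1 - ε ≤ t) → ven t = 0)

/-- `σ = ‖S_en - S₀‖_{2,α,Γ_en⁺} + ‖v_en‖_{1,α,Γ_en⁺}`. -/
def sigmaOf (α S0p : ℝ) (Sen ven : ℝ → ℝ) : ℝ :=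
  hNorm1 2 α (Icc 0 1) (fun t => Sen t - S0p) + hNorm1 1 α (Icc 0 1) ven

end

open Set MeasureTheory Filter Metric Topology intervalIntegral
open scoped Interval

lemma nozLF_isOpen (L : ℝ) (f : ℝ → ℝ) (hf : ContinuousOn f (Icc 0 L)) :
    IsOpen (NozLF L f) := by
  rw [isOpen_iff_mem_nhds]
  rintro x ⟨h1, h2, h3, h4⟩
  have hfc : ContinuousAt f x.1 :=
    (hf x.1 ⟨h1.le, h2.le⟩).continuousAt (Icc_mem_nhds h1 h2)
  have e1 : ∀ᶠ y : V2 in 𝓝 x, 0 < y.1 :=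
    continuous_fst.continuousAt.eventually (eventually_gt_nhds h1)
  have e2 : ∀ᶠ y : V2 in 𝓝 x, y.1 < L :=
    continuous_fst.continuousAt.eventually (eventually_lt_nhds h2)
  have e4 : ∀ᶠ y : V2 in 𝓝 x, y.2 < 1 :=
    continuous_snd.continuousAt.eventually (eventually_lt_nhds h4)
  have e3 : ∀ᶠ y : V2 in 𝓝 x, f y.1 < y.2 := by
    have ht : ContinuousAt (fun y : V2 => y.2 - f y.1) x :=
      continuous_snd.continuousAt.sub (hfc.comp continuous_fst.continuousAt)
    have := ht.eventually (eventually_gt_nhds (sub_pos.mpr h3))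
    filter_upwards [this] with y hy using sub_pos.mp hy
  filter_upwards [e1, e2, e3, e4] with y a b c d using ⟨a, b, c, d⟩

lemma mem_closure_nozLF (L : ℝ) (f : ℝ → ℝ) {s t : ℝ} (hs0 : 0 < s) (hsL : s < L)
    (hf1 : f s < 1) (hts : f s ≤ t) (ht1 : t ≤ 1) : (s, t) ∈ closure (NozLF L f) := by
  have hsub : ({s} : Set ℝ) ×ˢ Ioo (f s) 1 ⊆ NozLF L f := by
    rintro ⟨y1, y2⟩ ⟨hy1, hy2⟩
    simp only [mem_singleton_iff] at hy1
    subst hy1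
    exact ⟨hs0, hsL, hy2.1, hy2.2⟩
  have : (s, t) ∈ closure (({s} : Set ℝ) ×ˢ Ioo (f s) 1) := by
    rw [closure_prod_eq, closure_singleton, closure_Ioo hf1.ne]
    exact ⟨rfl, hts, ht1⟩
  exact closure_mono hsub this

set_option maxHeartbeats 1000000 in
lemma aux_main (L a : ℝ) (f : ℝ → ℝ) (P Q : V2 → ℝ)
    (hfC1 : ContDiffOn ℝ 1 f (Icc 0 L))
    (hfrange : ∀ x₁ ∈ Icc (0 : ℝ) L, f x₁ ∈ Ioo (-1 : ℝ) 1)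
    (hPC1 : ContDiffOn ℝ 1 P (closure (NozLF L f)))
    (hQC1 : ContDiffOn ℝ 1 Q (closure (NozLF L f)))
    (hcont : ∀ x ∈ NozLF L f,
      fderiv ℝ P x ((1 : ℝ), (0 : ℝ)) + fderiv ℝ Q x ((0 : ℝ), (1 : ℝ)) = 0)
    (hQtop : Q (a, 1) = 0)
    (hflux : ∀ x₁ ∈ Icc (0 : ℝ) L,
      (∫ t in (0 : ℝ)..1, P ((0 : ℝ), t)) = ∫ t in (f x₁)..1, P (x₁, t))
    (ha : a ∈ Ioo 0 L) :
    P (a, f a) * deriv f a = Q (a, f a) := by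
  obtain ⟨ha0, haL⟩ := ha
  have haIcc : a ∈ Icc (0 : ℝ) L := ⟨ha0.le, (lt_of_lt_of_le haL le_rfl).le⟩
  set D := closure (NozLF L f) with hDdef
  have hfcont : ContinuousOn f (Icc 0 L) := hfC1.continuousOn
  have hopen : IsOpen (NozLF L f) := nozLF_isOpen L f hfcont
  have hsubD : NozLF L f ⊆ D := subset_closure
  have hfa1 : f a < 1 := (hfrange a haIcc).2
  have hmemD : ∀ s t : ℝ, 0 < s → s < L → f s < 1 → f s ≤ t → t ≤ 1 → (s, t) ∈ D :=
    fun s t h1 h2 h3 h4 h5 => mem_closure_nozLF L f h1 h2 h3 h4 h5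
  have hx₀ : ((a, f a) : V2) ∈ D := hmemD a (f a) ha0 haL hfa1 le_rfl hfa1.le
  have hPcD : ContinuousOn P D := hPC1.continuousOn
  have hQcD : ContinuousOn Q D := hQC1.continuousOn
  -- derivative of f at a
  have hfd : HasDerivAt f (deriv f a) a :=
    (((hfC1.differentiableOn one_ne_zero) a haIcc).differentiableAt
      (Icc_mem_nhds ha0 haL)).hasDerivAt
  set d := deriv f a with hddef
  -- Lipschitz bound for f near a
  set δ₁ := min a (L - a) / 2 with hδ₁def
  have hδ₁ : 0 < δ₁ := by
    have : 0 < min a (L - a) := lt_min ha0 (by linarith)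
    positivity
  set If := Icc (a - δ₁) (a + δ₁) with hIfdef
  have hIfIoo : If ⊆ Ioo 0 L := by
    intro s hs
    have h1 : δ₁ ≤ a / 2 := by
      rw [hδ₁def]; have := min_le_left a (L - a); linarith
    have h2 : δ₁ ≤ (L - a) / 2 := by
      rw [hδ₁def]; have := min_le_right a (L - a); linarith
    obtain ⟨hs1, hs2⟩ := hs
    constructor <;> [linarith; linarith]
  have hIfIcc : If ⊆ Icc 0 L := fun s hs => ⟨(hIfIoo hs).1.le, (hIfIoo hs).2.le⟩
  have haIf : a ∈ If := ⟨by linarith, by linarith⟩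
  have hIfud : UniqueDiffOn ℝ If := uniqueDiffOn_Icc (by linarith)
  have hfCIf : ContDiffOn ℝ 1 f If := hfC1.mono hIfIcc
  obtain ⟨Lf, hLf⟩ := isCompact_Icc.exists_bound_of_continuousOn
    (hfCIf.continuousOn_derivWithin hIfud le_rfl)
  rw [← hIfdef] at hLf
  have hLf0 : 0 ≤ Lf := le_trans (norm_nonneg _) (hLf a haIf)
  have hfLip : ∀ s ∈ If, |f s - f a| ≤ Lf * |s - a| := by
    intro s hs
    have := (convex_Icc (a - δ₁) (a + δ₁)).norm_image_sub_le_of_norm_hasDerivWithin_le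
      (fun x hx => ((hfCIf.differentiableOn one_ne_zero) x hx).hasDerivWithinAt)
      (fun x hx => hLf x hx) haIf hs
    simpa [Real.norm_eq_abs] using this
  -- corner data for P at x₀ = (a, f a)
  obtain ⟨u, hu, p, hp⟩ := (hPC1 ((a, f a) : V2) hx₀) 1 le_rfl
  rw [insert_eq_of_mem hx₀] at hu
  have hx₀u : ((a, f a) : V2) ∈ u := mem_of_mem_nhdsWithin hx₀ hu
  set Pd : V2 → (V2 →L[ℝ] ℝ) :=
    fun y => (continuousMultilinearCurryFin1 ℝ V2 ℝ) (p y 1) with hPddef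
  have hder : ∀ y ∈ u, HasFDerivWithinAt P (Pd y) u y :=
    fun y hy => hp.hasFDerivWithinAt one_ne_zero hy
  have hPdc : ContinuousOn Pd u :=
    (continuousMultilinearCurryFin1 ℝ V2 ℝ).continuous.comp_continuousOn
      (hp.cont 1 le_rfl)
  set M₀ := ‖Pd ((a, f a) : V2)‖ + 1 with hM₀def
  have hM₀0 : 0 < M₀ := by positivity
  obtain ⟨r₀, hr₀, hball₀⟩ := Metric.mem_nhdsWithin_iff.mp hu
  have hPdev : ∀ᶠ y in 𝓝[u] ((a, f a) : V2), ‖Pd y‖ < M₀ := by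
    have h1 : Tendsto (fun y => ‖Pd y‖) (𝓝[u] ((a, f a) : V2)) (𝓝 ‖Pd ((a, f a) : V2)‖) :=
      (hPdc ((a, f a) : V2) hx₀u).norm
    exact h1.eventually (eventually_lt_nhds (by linarith))
  obtain ⟨r₀', hr₀', hball₀'⟩ := Metric.mem_nhdsWithin_iff.mp hPdev
  set r₁ := min r₀ r₀' with hr₁def
  have hr₁ : 0 < r₁ := lt_min hr₀ hr₀'
  have hLipCorner : ∀ y z : V2, segment ℝ y z ⊆ D ∩ ball ((a, f a) : V2) r₁ →
      ‖P y - P z‖ ≤ M₀ * ‖y - z‖ := by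
    intro y z hseg
    have hsegu : segment ℝ y z ⊆ u := by
      intro w hw
      obtain ⟨hwD, hwb⟩ := hseg hw
      exact hball₀ ⟨ball_subset_ball (min_le_left _ _) hwb, hwD⟩
    refine (convex_segment y z).norm_image_sub_le_of_norm_hasFDerivWithin_le
      (fun w hw => (hder w (hsegu hw)).mono hsegu)
      (fun w hw => ?_) (right_mem_segment ℝ y z) (left_mem_segment ℝ y z)
    exact le_of_lt (hball₀' ⟨ball_subset_ball (min_le_right _ _) (hseg hw).2, hsegu hw⟩)
  -- oscillation of P near the corner
  have hoscP : ∀ ε' > (0 : ℝ), ∃ r > (0 : ℝ),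
      ∀ y ∈ D ∩ ball ((a, f a) : V2) r, |P y - P ((a, f a) : V2)| ≤ ε' := by
    intro ε' hε'
    obtain ⟨r, hr, hrr⟩ := Metric.continuousWithinAt_iff.mp (hPcD ((a, f a) : V2) hx₀) ε' hε'
    refine ⟨r, hr, fun y hy => ?_⟩
    have := hrr hy.1 (mem_ball.mp hy.2)
    rw [Real.dist_eq] at this
    exact this.le
  clear_value M₀ r₁
  clear hball₀' hball₀ hPdev hPdc hder hp hx₀u hu hM₀def hr₁def hr₀ hr₀' hPddef
  clear Pd p u r₀ r₀'
  -- vertical continuity of Q at the corner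
  set q0 : ℝ → ℝ := fun t => Q (a, t) with hq0def
  have hq0c : ContinuousOn q0 (Icc (f a) 1) := by
    refine hQcD.comp ((continuous_const.prodMk continuous_id).continuousOn) ?_
    intro t ht
    exact hmemD a t ha0 haL hfa1 ht.1 ht.2
  clear_value D d δ₁ If q0
  have hABS : ∀ ε > (0 : ℝ), |P ((a, f a) : V2) * d - Q ((a, f a) : V2)| ≤ ε := by
    intro ε hε
    obtain ⟨ε₂, hε₂def⟩ : ∃ x : ℝ, x = ε / (8 * (3 * Lf + 1)) := ⟨_, rfl⟩
    have hε₂ : 0 < ε₂ := by rw [hε₂def]; positivity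
    obtain ⟨r₂, hr₂, hosc⟩ := hoscP ε₂ hε₂
    -- continuity of q0 at f a
    obtain ⟨δc, hδc, hδcq⟩ := Metric.continuousWithinAt_iff.mp (hq0c (f a) ⟨le_rfl, hfa1.le⟩) (ε / 2) (by positivity)
    -- choice of the level c
    obtain ⟨γ, hγdef⟩ : ∃ x : ℝ,
        x = min (min (1 - f a) δc) (min (ε / (8 * (M₀ + 1))) (min r₁ r₂)) / 2 := ⟨_, rfl⟩
    have hγpos : 0 < γ := by
      have h1 : 0 < 1 - f a := by linarith
      have h2 : 0 < ε / (8 * (M₀ + 1)) := div_pos hε (by linarith)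
      have : 0 < min (min (1 - f a) δc) (min (ε / (8 * (M₀ + 1))) (min r₁ r₂)) :=
        lt_min (lt_min h1 hδc) (lt_min h2 (lt_min hr₁ hr₂))
      rw [hγdef]; linarith
    obtain ⟨c, hcdef⟩ : ∃ x : ℝ, x = f a + γ := ⟨_, rfl⟩
    have hmins : min (min (1 - f a) δc) (min (ε / (8 * (M₀ + 1))) (min r₁ r₂)) ≤ 1 - f a
        ∧ min (min (1 - f a) δc) (min (ε / (8 * (M₀ + 1))) (min r₁ r₂)) ≤ δc
        ∧ min (min (1 - f a) δc) (min (ε / (8 * (M₀ + 1))) (min r₁ r₂)) ≤ ε / (8 * (M₀ + 1))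
        ∧ min (min (1 - f a) δc) (min (ε / (8 * (M₀ + 1))) (min r₁ r₂)) ≤ r₁
        ∧ min (min (1 - f a) δc) (min (ε / (8 * (M₀ + 1))) (min r₁ r₂)) ≤ r₂ := by
      refine ⟨?_, ?_, ?_, ?_, ?_⟩ <;>
        simp only [min_le_iff, le_refl, true_or, or_true] <;> tauto
    obtain ⟨hm1, hm2, hm3, hm4, hm5⟩ := hmins
    have hγle1 : γ ≤ (1 - f a) / 2 := by rw [hγdef]; linarith
    have hγleδc : γ ≤ δc / 2 := by rw [hγdef]; linarith
    have hγleM : γ ≤ ε / (8 * (M₀ + 1)) / 2 := by rw [hγdef]; linarith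
    have hγler₁ : γ ≤ r₁ / 2 := by rw [hγdef]; linarith
    have hγler₂ : γ ≤ r₂ / 2 := by rw [hγdef]; linarith
    have hcfa : f a < c := by rw [hcdef]; linarith
    have hc1 : c < 1 := by rw [hcdef]; linarith
    have hMc : M₀ * (c - f a) ≤ ε / 8 := by
      have h1 : c - f a = γ := by rw [hcdef]; ring
      have h2 : M₀ * γ ≤ (M₀ + 1) * γ :=
        mul_le_mul_of_nonneg_right (by linarith) hγpos.le
      have h3 : (M₀ + 1) * γ ≤ (M₀ + 1) * (ε / (8 * (M₀ + 1)) / 2) :=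
        mul_le_mul_of_nonneg_left hγleM (by linarith)
      have hM₀ne : M₀ + 1 ≠ 0 := by linarith
      have h4 : (M₀ + 1) * (ε / (8 * (M₀ + 1)) / 2) = ε / 16 := by
        field_simp
        ring
      rw [h1]
      linarith
    have hcr₁ : c - f a < r₁ := by have h1 : c - f a = γ := by rw [hcdef]; ring
                                   rw [h1]; linarith
    have hcr₂ : c - f a < r₂ := by have h1 : c - f a = γ := by rw [hcdef]; ring
                                   rw [h1]; linarith
    have hq0close : |q0 c - q0 (f a)| ≤ ε / 2 := by
      have h1 : c ∈ Icc (f a) 1 := ⟨hcfa.le, hc1.le⟩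
      have h2 : dist c (f a) < δc := by
        rw [Real.dist_eq]
        have h1' : c - f a = γ := by rw [hcdef]; ring
        rw [abs_of_pos (by linarith : (0:ℝ) < c - f a), h1']
        linarith
      have := hδcq h1 h2
      rw [Real.dist_eq] at this
      exact this.le
    -- the rectangle K above level c
    obtain ⟨δK, hδKdef⟩ : ∃ x : ℝ, x = min δ₁ ((c - f a) / (2 * (Lf + 1))) := ⟨_, rfl⟩
    have hδK : 0 < δK := by
      rw [hδKdef]
      exact lt_min hδ₁ (div_pos (by linarith) (by positivity))
    have hδKδ₁ : δK ≤ δ₁ := by rw [hδKdef]; exact min_le_left _ _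
    have hδKc : Lf * δK ≤ (c - f a) / 2 := by
      have h1 : δK ≤ (c - f a) / (2 * (Lf + 1)) := by rw [hδKdef]; exact min_le_right _ _
      have h2 : Lf * δK ≤ Lf * ((c - f a) / (2 * (Lf + 1))) :=
        mul_le_mul_of_nonneg_left h1 hLf0
      have h3 : Lf * ((c - f a) / (2 * (Lf + 1))) ≤ (c - f a) / 2 := by
        have hca : (0:ℝ) ≤ c - f a := by linarith
        have h4 : Lf * (c - f a) ≤ (Lf + 1) * (c - f a) :=
          mul_le_mul_of_nonneg_right (by linarith) hca
        have h6 : (Lf + 1) * (c - f a) / (2 * (Lf + 1)) = (c - f a) / 2 := by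
          field_simp [show (Lf + 1) ≠ 0 by positivity]
        rw [mul_div_assoc', ← h6]
        gcongr
      linarith
    set K := Icc (a - δK) (a + δK) ×ˢ Icc c 1 with hKdef
    have hKmem : ∀ s t : ℝ, |s - a| ≤ δK → t ∈ Icc c 1 → ((s, t) : V2) ∈ K := by
      intro s t hs ht
      have := abs_le.mp hs
      exact ⟨⟨by linarith [this.1], by linarith [this.2]⟩, ht⟩
    have hKD : K ⊆ D := by
      rintro ⟨s, t⟩ ⟨hs, ht⟩
      have hs' : s ∈ If := by
        rw [hIfdef, mem_Icc]
        exact ⟨by linarith [hs.1], by linarith [hs.2]⟩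
      have hsIoo := hIfIoo hs'
      have habs : |s - a| ≤ δK := by
        rw [abs_le]; exact ⟨by linarith [hs.1], by linarith [hs.2]⟩
      have hfs : f s ≤ f a + (c - f a) / 2 := by
        have h1 := hfLip s hs'
        have h2 : Lf * |s - a| ≤ Lf * δK := mul_le_mul_of_nonneg_left habs hLf0
        have := abs_le.mp h1
        linarith
      exact hmemD s t hsIoo.1 hsIoo.2 (by linarith) (by linarith [ht.1]) ht.2
    have hKconv : Convex ℝ K := (convex_Icc _ _).prod (convex_Icc _ _)
    have hKcomp : IsCompact K := isCompact_Icc.prod isCompact_Icc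
    have hKuniq : UniqueDiffOn ℝ K := by
      refine uniqueDiffOn_convex hKconv ⟨((a, (c + 1) / 2) : V2), ?_⟩
      rw [hKdef, interior_prod_eq, interior_Icc, interior_Icc]
      refine Set.mem_prod.mpr ⟨Set.mem_Ioo.mpr ⟨?_, ?_⟩, Set.mem_Ioo.mpr ⟨?_, ?_⟩⟩ <;> linarith
    clear_value K
    have hPK : ContDiffOn ℝ 1 P K := hPC1.mono hKD
    have hQK : ContDiffOn ℝ 1 Q K := hQC1.mono hKD
    obtain ⟨MP, hMP⟩ := hKcomp.exists_bound_of_continuousOn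
      (hPK.continuousOn_fderivWithin hKuniq le_rfl)
    have hLipKP : ∀ y ∈ K, ∀ z ∈ K, ‖P y - P z‖ ≤ max MP 0 * ‖y - z‖ := by
      intro y hy z hz
      exact hKconv.norm_image_sub_le_of_norm_hasFDerivWithin_le
        (fun w hw => ((hPK.differentiableOn one_ne_zero) w hw).hasFDerivWithinAt)
        (fun w hw => (hMP w hw).trans (le_max_left _ _)) hz hy
    obtain ⟨MQ, hMQ⟩ := hKcomp.exists_bound_of_continuousOn
      (hQK.continuousOn_fderivWithin hKuniq le_rfl)
    have hc1le : c ≤ 1 := hc1.le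
    have hIoc_sub : Ι c 1 = Ioc c 1 := uIoc_of_le hc1le
    have hae1 : ∀ᵐ t : ℝ ∂volume, t ≠ 1 := by
      have h0 : (volume : Measure ℝ) {(1 : ℝ)} = 0 := Real.volume_singleton
      have := measure_eq_zero_iff_ae_notMem.mp h0
      simpa using this
    -- differentiation under the integral sign
    have hF'm : AEStronglyMeasurable (fun t => fderiv ℝ P (a, t) ((1 : ℝ), (0 : ℝ)))
        ((volume : Measure ℝ).restrict (Ι c 1)) := by
      have h1 : Measurable fun x : V2 => fderiv ℝ P x ((1 : ℝ), (0 : ℝ)) :=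
        measurable_fderiv_apply_const ℝ P _
      exact (h1.comp (measurable_const.prodMk measurable_id)).aestronglyMeasurable
    have hlips : ∀ᵐ t : ℝ ∂volume, t ∈ Ι c 1 →
        LipschitzOnWith (Real.nnabs (max MP 0)) (fun s => P (s, t)) (ball a δK) := by
      refine Eventually.of_forall (fun t ht => ?_)
      rw [hIoc_sub] at ht
      refine LipschitzOnWith.of_dist_le_mul (fun x hx y hy => ?_)
      have hxK : ((x, t) : V2) ∈ K :=
        hKmem _ _ (le_of_lt (by simpa [Real.dist_eq] using mem_ball.mp hx)) ⟨ht.1.le, ht.2⟩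
      have hyK : ((y, t) : V2) ∈ K :=
        hKmem _ _ (le_of_lt (by simpa [Real.dist_eq] using mem_ball.mp hy)) ⟨ht.1.le, ht.2⟩
      have hlip := hLipKP (x, t) hxK (y, t) hyK
      have hnorm : ‖((x, t) : V2) - ((y, t) : V2)‖ = ‖x - y‖ := by
        rw [Prod.mk_sub_mk, sub_self, Prod.norm_def]
        simp [max_eq_left (norm_nonneg _)]
      rw [hnorm] at hlip
      rw [Real.dist_eq, Real.dist_eq]
      calc |P (x, t) - P (y, t)| ≤ max MP 0 * |x - y| := by
            simpa [Real.norm_eq_abs] using hlip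
        _ = ↑(Real.nnabs (max MP 0)) * |x - y| := by
            rw [Real.coe_nnabs, abs_of_nonneg (le_max_right MP 0)]
    have hdiff : ∀ᵐ t : ℝ ∂volume, t ∈ Ι c 1 →
        HasDerivAt (fun s => P (s, t)) (fderiv ℝ P (a, t) ((1 : ℝ), (0 : ℝ))) a := by
      filter_upwards [hae1] with t ht1 ht
      rw [hIoc_sub] at ht
      have htne : t < 1 := lt_of_le_of_ne ht.2 ht1
      have hmemN : ((a, t) : V2) ∈ NozLF L f := ⟨ha0, haL, by linarith [ht.1], htne⟩
      have hdP : DifferentiableAt ℝ P (a, t) :=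
        ((hPC1.differentiableOn one_ne_zero) (a, t) (hsubD hmemN)).differentiableAt
          (mem_of_superset (hopen.mem_nhds hmemN) hsubD)
      have hline : HasDerivAt (fun s : ℝ => ((s, t) : V2)) ((1 : ℝ), (0 : ℝ)) a :=
        (hasDerivAt_id a).prodMk (hasDerivAt_const a t)
      exact hdP.hasFDerivAt.comp_hasDerivAt a hline
    have hFmeas : ∀ᶠ s in 𝓝 a, AEStronglyMeasurable (fun t => P (s, t))
        ((volume : Measure ℝ).restrict (Ι c 1)) := by
      filter_upwards [Metric.ball_mem_nhds a hδK] with s hs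
      have hcont' : ContinuousOn (fun t => P (s, t)) (Icc c 1) := by
        refine hPcD.comp ((continuous_const.prodMk continuous_id).continuousOn) ?_
        intro t ht
        exact hKD (hKmem s t (le_of_lt (by simpa [Real.dist_eq] using mem_ball.mp hs)) ht)
      rw [hIoc_sub]
      exact (hcont'.mono Ioc_subset_Icc_self).aestronglyMeasurable measurableSet_Ioc
    have hFint : IntervalIntegrable (fun t => P (a, t)) volume c 1 := by
      apply ContinuousOn.intervalIntegrable
      rw [uIcc_of_le hc1le]
      refine hPcD.comp ((continuous_const.prodMk continuous_id).continuousOn) ?_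
      intro t ht
      exact hKD (hKmem a t (by simp [hδK.le]) ht)
    obtain ⟨-, hgC⟩ := intervalIntegral.hasDerivAt_integral_of_dominated_loc_of_lip (Metric.ball_mem_nhds a hδK)
      hFmeas hFint hF'm hlips intervalIntegrable_const hdiff
    -- value of the derivative via FTC and the continuity equation
    have hbdQ : ∀ t ∈ Ioo c 1, ‖fderiv ℝ Q (a, t) ((0 : ℝ), (1 : ℝ))‖ ≤ max MQ 0 := by
      intro t ht
      have hint : ((a, t) : V2) ∈ interior K := by
        rw [hKdef, interior_prod_eq, interior_Icc, interior_Icc]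
        exact ⟨⟨by linarith, by linarith⟩, ht⟩
      have heq : fderiv ℝ Q (a, t) = fderivWithin ℝ Q K (a, t) :=
        (fderivWithin_of_mem_nhds (mem_interior_iff_mem_nhds.mp hint)).symm
      rw [heq]
      calc ‖fderivWithin ℝ Q K (a, t) ((0 : ℝ), (1 : ℝ))‖
          ≤ ‖fderivWithin ℝ Q K (a, t)‖ * ‖((0 : ℝ), (1 : ℝ))‖ :=
            ContinuousLinearMap.le_opNorm _ _
        _ ≤ max MQ 0 * 1 := by
            apply mul_le_mul ((hMQ _ (interior_subset hint)).trans (le_max_left _ _))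
            · simp [Prod.norm_def]
            · positivity
            · exact le_max_right _ _
        _ = max MQ 0 := mul_one _
    have hg'int : IntervalIntegrable (fun t => fderiv ℝ Q (a, t) ((0 : ℝ), (1 : ℝ)))
        volume c 1 := by
      rw [intervalIntegrable_iff_integrableOn_Ioc_of_le hc1le]
      refine Integrable.mono' (integrable_const (max MQ 0))
        (((measurable_fderiv_apply_const ℝ Q _).comp
          (measurable_const.prodMk measurable_id)).aestronglyMeasurable) ?_
      rw [ae_restrict_iff' measurableSet_Ioc]
      filter_upwards [hae1] with t ht1 ht
      exact hbdQ t ⟨ht.1, lt_of_le_of_ne ht.2 ht1⟩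
    have hq0deriv : ∀ t ∈ Ioo c 1,
        HasDerivWithinAt q0 (fderiv ℝ Q (a, t) ((0 : ℝ), (1 : ℝ))) (Ioi t) t := by
      intro t ht
      rw [hq0def]
      have hmemN : ((a, t) : V2) ∈ NozLF L f := ⟨ha0, haL, by linarith [ht.1], ht.2⟩
      have hdQ : DifferentiableAt ℝ Q (a, t) :=
        ((hQC1.differentiableOn one_ne_zero) (a, t) (hsubD hmemN)).differentiableAt
          (mem_of_superset (hopen.mem_nhds hmemN) hsubD)
      have hline : HasDerivAt (fun τ : ℝ => ((a, τ) : V2)) ((0 : ℝ), (1 : ℝ)) t :=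
        (hasDerivAt_const t a).prodMk (hasDerivAt_id t)
      exact (hdQ.hasFDerivAt.comp_hasDerivAt t hline).hasDerivWithinAt
    have hFTC : (∫ t in c..1, fderiv ℝ Q (a, t) ((0 : ℝ), (1 : ℝ))) = q0 1 - q0 c :=
      intervalIntegral.integral_eq_sub_of_hasDeriv_right_of_le hc1le
        (hq0c.mono (Icc_subset_Icc hcfa.le le_rfl)) hq0deriv hg'int
    have hcongr : (∫ t in c..1, fderiv ℝ P (a, t) ((1 : ℝ), (0 : ℝ)))
        = ∫ t in c..1, -(fderiv ℝ Q (a, t) ((0 : ℝ), (1 : ℝ))) := by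
      apply intervalIntegral.integral_congr_ae
      filter_upwards [hae1] with t ht1 ht
      rw [hIoc_sub] at ht
      have hmemN : ((a, t) : V2) ∈ NozLF L f :=
        ⟨ha0, haL, by linarith [ht.1], lt_of_le_of_ne ht.2 ht1⟩
      have := hcont (a, t) hmemN
      linarith
    have hq01 : q0 1 = 0 := by rw [hq0def]; exact hQtop
    have hval : (∫ t in c..1, fderiv ℝ P (a, t) ((1 : ℝ), (0 : ℝ))) = q0 c := by
      rw [hcongr, intervalIntegral.integral_neg, hFTC, hq01]
      ring
    have hgC' : HasDerivAt (fun s => ∫ t in c..1, P (s, t)) (q0 c) a := hval ▸ hgC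
    -- the punctured-neighbourhood estimate
    obtain ⟨δs, hδsdef⟩ : ∃ x : ℝ, x = min δK (min r₁ r₂ / (2 * (Lf + 2))) := ⟨_, rfl⟩
    have hδs : 0 < δs := by
      rw [hδsdef]
      exact lt_min hδK (div_pos (lt_min hr₁ hr₂) (by linarith))
    have hδsδK : δs ≤ δK := by rw [hδsdef]; exact min_le_left _ _
    have hδsr : δs ≤ min r₁ r₂ / (2 * (Lf + 2)) := by rw [hδsdef]; exact min_le_right _ _
    have hLf2δs : (Lf + 2) * δs ≤ min r₁ r₂ / 2 := by
      have h1 : (Lf + 2) * δs ≤ (Lf + 2) * (min r₁ r₂ / (2 * (Lf + 2))) :=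
        mul_le_mul_of_nonneg_left hδsr (by linarith)
      have h2 : (Lf + 2) * (min r₁ r₂ / (2 * (Lf + 2))) = min r₁ r₂ / 2 := by
        field_simp [show Lf + 2 ≠ 0 by linarith]
      linarith [h2 ▸ h1]
    have hLf1δs_r₁ : (Lf + 1) * δs < r₁ := by
      have h1 : (Lf + 1) * δs ≤ (Lf + 2) * δs := mul_le_mul_of_nonneg_right (by linarith) hδs.le
      have h2 : min r₁ r₂ / 2 < min r₁ r₂ := by
        have := lt_min hr₁ hr₂; linarith
      have h3 : min r₁ r₂ ≤ r₁ := min_le_left _ _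
      linarith
    have hLf1δs_r₂ : (Lf + 1) * δs < r₂ := by
      have h1 : (Lf + 1) * δs ≤ (Lf + 2) * δs := mul_le_mul_of_nonneg_right (by linarith) hδs.le
      have h2 : min r₁ r₂ / 2 < min r₁ r₂ := by
        have := lt_min hr₁ hr₂; linarith
      have h3 : min r₁ r₂ ≤ r₂ := min_le_right _ _
      linarith
    have hKB : ∀ᶠ s in 𝓝[≠] a,
        |P ((a, f a) : V2) * slope f a s - slope (fun s => ∫ t in c..1, P (s, t)) a s|
          ≤ 3 * Lf * ε₂ + M₀ * (c - f a) := by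
      filter_upwards [mem_nhdsWithin_of_mem_nhds (Metric.ball_mem_nhds a hδs),
        self_mem_nhdsWithin] with s hs hne'
      have hne : s ≠ a := hne'
      have hsa : |s - a| < δs := by
        have := mem_ball.mp hs; rwa [Real.dist_eq] at this
      have hsane : s - a ≠ 0 := sub_ne_zero.mpr hne
      have habs0 : 0 < |s - a| := abs_pos.mpr hsane
      have hsIf : s ∈ If := by
        rw [hIfdef, mem_Icc]
        have := abs_le.mp hsa.le
        exact ⟨by linarith [this.1], by linarith [this.2]⟩
      have hsIoo := hIfIoo hsIf
      have hsIcc := hIfIcc hsIf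
      have hfsLip := hfLip s hsIf
      have hfsbd := abs_le.mp hfsLip
      obtain ⟨m, hmdef⟩ : ∃ x : ℝ, x = f a + Lf * |s - a| := ⟨_, rfl⟩
      have hLfsa : 0 ≤ Lf * |s - a| := mul_nonneg hLf0 (abs_nonneg _)
      have hLfsaδ : Lf * |s - a| ≤ Lf * δs := mul_le_mul_of_nonneg_left hsa.le hLf0
      have hLfδsδK : Lf * δs ≤ Lf * δK := mul_le_mul_of_nonneg_left hδsδK hLf0
      have hm_fa : f a ≤ m := by rw [hmdef]; linarith
      have hm_fs : f s ≤ m := by rw [hmdef]; linarith [hfsbd.1, hfsbd.2]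
      have hm_c : m ≤ c := by rw [hmdef]; linarith [hδKc]
      have hm_1 : m ≤ 1 := by linarith
      have hfs1 : f s < 1 := by linarith
      have hfsc : f s ≤ c := le_trans hm_fs hm_c
      -- continuity of the slices
      have hPcs : ContinuousOn (fun t => P (s, t)) (Icc (f s) 1) := by
        refine hPcD.comp ((continuous_const.prodMk continuous_id).continuousOn) ?_
        intro t ht
        exact hmemD s t hsIoo.1 hsIoo.2 hfs1 ht.1 ht.2
      have hPca : ContinuousOn (fun t => P (a, t)) (Icc (f a) 1) := by
        refine hPcD.comp ((continuous_const.prodMk continuous_id).continuousOn) ?_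
        intro t ht
        exact hmemD a t ha0 haL hfa1 ht.1 ht.2
      have i1s : IntervalIntegrable (fun t => P (s, t)) volume (f s) m := by
        apply ContinuousOn.intervalIntegrable
        apply hPcs.mono
        rw [uIcc_of_le hm_fs]
        exact Icc_subset_Icc le_rfl hm_1
      have i2s : IntervalIntegrable (fun t => P (s, t)) volume m c := by
        apply ContinuousOn.intervalIntegrable
        apply hPcs.mono
        rw [uIcc_of_le hm_c]
        exact Icc_subset_Icc hm_fs hc1le
      have i3s : IntervalIntegrable (fun t => P (s, t)) volume c 1 := by
        apply ContinuousOn.intervalIntegrable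
        apply hPcs.mono
        rw [uIcc_of_le hc1le]
        exact Icc_subset_Icc hfsc le_rfl
      have i1a : IntervalIntegrable (fun t => P (a, t)) volume (f a) m := by
        apply ContinuousOn.intervalIntegrable
        apply hPca.mono
        rw [uIcc_of_le hm_fa]
        exact Icc_subset_Icc le_rfl hm_1
      have i2a : IntervalIntegrable (fun t => P (a, t)) volume m c := by
        apply ContinuousOn.intervalIntegrable
        apply hPca.mono
        rw [uIcc_of_le hm_c]
        exact Icc_subset_Icc hm_fa hc1le
      have i3a : IntervalIntegrable (fun t => P (a, t)) volume c 1 := by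
        apply ContinuousOn.intervalIntegrable
        apply hPca.mono
        rw [uIcc_of_le hc1le]
        exact Icc_subset_Icc hcfa.le le_rfl
      -- mass flux identity
      have hfl : (∫ t in (f s)..1, P (s, t)) = ∫ t in (f a)..1, P (a, t) :=
        (hflux s hsIcc).symm.trans (hflux a haIcc)
      have hsplit_s := intervalIntegral.integral_add_adjacent_intervals i1s i2s
      have hsplit_s' := intervalIntegral.integral_add_adjacent_intervals (i1s.trans i2s) i3s
      have hsplit_a := intervalIntegral.integral_add_adjacent_intervals i1a i2a
      have hsplit_a' := intervalIntegral.integral_add_adjacent_intervals (i1a.trans i2a) i3a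
      -- corner estimates
      have hE1 : |∫ t in (f s)..m, (P (s, t) - P ((a, f a) : V2))|
          ≤ ε₂ * (2 * (Lf * |s - a|)) := by
        have hb : ∀ t ∈ Ι (f s) m, ‖P (s, t) - P ((a, f a) : V2)‖ ≤ ε₂ := by
          intro t ht
          rw [uIoc_of_le hm_fs] at ht
          have ht1 : t ≤ 1 := le_trans ht.2 hm_1
          have htD : ((s, t) : V2) ∈ D := hmemD s t hsIoo.1 hsIoo.2 hfs1 ht.1.le ht1
          have htb : ((s, t) : V2) ∈ ball ((a, f a) : V2) r₂ := by
            rw [mem_ball, Prod.dist_eq, Real.dist_eq, Real.dist_eq, max_lt_iff]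
            constructor
            · linarith
            · have htm : t ≤ m := ht.2
              have htfs : f s ≤ t := ht.1.le
              rw [hmdef] at htm
              rw [abs_lt]
              constructor <;> linarith [hfsbd.1]
          have := hosc (s, t) ⟨htD, htb⟩
          simpa [Real.norm_eq_abs] using this
        have hle := intervalIntegral.norm_integral_le_of_norm_le_const hb
        rw [Real.norm_eq_abs] at hle
        have h2 : |m - f s| ≤ 2 * (Lf * |s - a|) := by
          rw [abs_of_nonneg (by linarith : (0:ℝ) ≤ m - f s), hmdef]
          linarith [hfsbd.1]
        calc |∫ t in (f s)..m, (P (s, t) - P ((a, f a) : V2))| ≤ ε₂ * |m - f s| := hle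
          _ ≤ ε₂ * (2 * (Lf * |s - a|)) := mul_le_mul_of_nonneg_left h2 hε₂.le
      have hE2 : |∫ t in (f a)..m, (P (a, t) - P ((a, f a) : V2))|
          ≤ ε₂ * (Lf * |s - a|) := by
        have hb : ∀ t ∈ Ι (f a) m, ‖P (a, t) - P ((a, f a) : V2)‖ ≤ ε₂ := by
          intro t ht
          rw [uIoc_of_le hm_fa] at ht
          have ht1 : t ≤ 1 := le_trans ht.2 hm_1
          have htD : ((a, t) : V2) ∈ D := hmemD a t ha0 haL hfa1 ht.1.le ht1
          have htb : ((a, t) : V2) ∈ ball ((a, f a) : V2) r₂ := by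
            rw [mem_ball, Prod.dist_eq, Real.dist_eq, Real.dist_eq, max_lt_iff]
            constructor
            · simpa using (by linarith : (0:ℝ) < r₂)
            · have htm : t ≤ m := ht.2
              rw [hmdef] at htm
              rw [abs_lt]
              constructor <;> linarith [ht.1]
          have := hosc (a, t) ⟨htD, htb⟩
          simpa [Real.norm_eq_abs] using this
        have hle := intervalIntegral.norm_integral_le_of_norm_le_const hb
        rw [Real.norm_eq_abs] at hle
        have h2 : |m - f a| ≤ Lf * |s - a| := by
          rw [abs_of_nonneg (by linarith : (0:ℝ) ≤ m - f a), hmdef]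
          linarith
        calc |∫ t in (f a)..m, (P (a, t) - P ((a, f a) : V2))| ≤ ε₂ * |m - f a| := hle
          _ ≤ ε₂ * (Lf * |s - a|) := mul_le_mul_of_nonneg_left h2 hε₂.le
      -- middle strip estimate via the corner Lipschitz bound
      have hB : |∫ t in m..c, (P (s, t) - P (a, t))| ≤ M₀ * (c - f a) * |s - a| := by
        have hb : ∀ t ∈ Ι m c, ‖P (s, t) - P (a, t)‖ ≤ M₀ * |s - a| := by
          intro t ht
          rw [uIoc_of_le hm_c] at ht
          have hseg : segment ℝ ((s, t) : V2) ((a, t) : V2) ⊆ D ∩ ball ((a, f a) : V2) r₁ := by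
            intro w hw
            rw [segment_eq_image] at hw
            obtain ⟨θ, hθ, rfl⟩ := hw
            have hwp : ((1 - θ) • ((s, t) : V2) + θ • ((a, t) : V2))
                = (((1 - θ) * s + θ * a, t) : V2) := by
              apply Prod.ext <;> simp [smul_eq_mul] <;> ring
            show ((1 - θ) • ((s, t) : V2) + θ • ((a, t) : V2)) ∈ D ∩ ball ((a, f a) : V2) r₁
            rw [hwp]
            obtain ⟨hθ0, hθ1⟩ := hθ
            have hwa : |(1 - θ) * s + θ * a - a| ≤ |s - a| := by
              have h1 : (1 - θ) * s + θ * a - a = (1 - θ) * (s - a) := by ring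
              rw [h1, abs_mul, abs_of_nonneg (by linarith : (0:ℝ) ≤ 1 - θ)]
              exact mul_le_of_le_one_left (abs_nonneg _) (by linarith)
            have hw1If : (1 - θ) * s + θ * a ∈ If := by
              rw [hIfdef, mem_Icc]
              have := abs_le.mp hwa
              constructor <;> linarith [this.1, this.2, abs_le.mp hsa.le]
            have hw1Ioo := hIfIoo hw1If
            have hfw := abs_le.mp (hfLip _ hw1If)
            have hfw1m : f ((1 - θ) * s + θ * a) ≤ m := by
              have h2 : Lf * |(1 - θ) * s + θ * a - a| ≤ Lf * |s - a| :=
                mul_le_mul_of_nonneg_left hwa hLf0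
              rw [hmdef]
              linarith [hfw.2]
            constructor
            · exact hmemD _ t hw1Ioo.1 hw1Ioo.2 (by linarith) (by linarith [ht.1])
                (by linarith [ht.2])
            · rw [mem_ball, Prod.dist_eq, Real.dist_eq, Real.dist_eq, max_lt_iff]
              dsimp only
              constructor
              · have := abs_le.mp hwa
                rw [abs_lt]
                constructor <;> linarith [abs_le.mp hsa.le]
              · rw [abs_lt]
                constructor <;> linarith [ht.1, ht.2, hm_fa]
          have hlip := hLipCorner (s, t) (a, t) hseg
          have hnorm : ‖((s, t) : V2) - ((a, t) : V2)‖ = |s - a| := by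
            rw [Prod.mk_sub_mk, sub_self, Prod.norm_def]
            simp [Real.norm_eq_abs, max_eq_left (abs_nonneg (s - a))]
          rw [hnorm] at hlip
          simpa [Real.norm_eq_abs] using hlip
        have hle := intervalIntegral.norm_integral_le_of_norm_le_const hb
        rw [Real.norm_eq_abs] at hle
        have h2 : |c - m| ≤ c - f a := by
          rw [abs_of_nonneg (by linarith : (0:ℝ) ≤ c - m)]
          linarith
        calc |∫ t in m..c, (P (s, t) - P (a, t))|
            ≤ M₀ * |s - a| * |c - m| := hle
          _ ≤ M₀ * |s - a| * (c - f a) :=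
              mul_le_mul_of_nonneg_left h2 (mul_nonneg hM₀0.le (abs_nonneg _))
          _ = M₀ * (c - f a) * |s - a| := by ring
      -- rewrite the corner integrals
      have hrw1 : (∫ t in (f s)..m, P (s, t))
          = (∫ t in (f s)..m, (P (s, t) - P ((a, f a) : V2))) + (m - f s) * P ((a, f a) : V2) := by
        rw [intervalIntegral.integral_sub i1s intervalIntegrable_const,
          intervalIntegral.integral_const, smul_eq_mul]
        ring
      have hrw2 : (∫ t in (f a)..m, P (a, t))
          = (∫ t in (f a)..m, (P (a, t) - P ((a, f a) : V2))) + (m - f a) * P ((a, f a) : V2) := by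
        rw [intervalIntegral.integral_sub i1a intervalIntegrable_const,
          intervalIntegral.integral_const, smul_eq_mul]
        ring
      have hsubB : (∫ t in m..c, (P (s, t) - P (a, t)))
          = (∫ t in m..c, P (s, t)) - ∫ t in m..c, P (a, t) :=
        intervalIntegral.integral_sub i2s i2a
      -- numerator identity
      have hnum : P ((a, f a) : V2) * (f s - f a)
            - ((∫ t in c..1, P (s, t)) - ∫ t in c..1, P (a, t))
          = (∫ t in (f s)..m, (P (s, t) - P ((a, f a) : V2)))
            - (∫ t in (f a)..m, (P (a, t) - P ((a, f a) : V2)))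
            + (∫ t in m..c, (P (s, t) - P (a, t))) := by
        have e1 := hsplit_s
        have e2 := hsplit_s'
        have e3 := hsplit_a
        have e4 := hsplit_a'
        rw [hrw1] at e1
        rw [hrw2] at e3
        rw [hsubB]
        linarith [hfl]
      -- conclusion for this s
      have hslopeeq : P ((a, f a) : V2) * slope f a s
            - slope (fun s => ∫ t in c..1, P (s, t)) a s
          = (P ((a, f a) : V2) * (f s - f a)
              - ((∫ t in c..1, P (s, t)) - ∫ t in c..1, P (a, t))) / (s - a) := by
        simp only [slope_def_field]
        field_simp
      rw [hslopeeq, hnum, abs_div]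
      rw [div_le_iff₀ habs0]
      have htri : |(∫ t in (f s)..m, (P (s, t) - P ((a, f a) : V2)))
            - (∫ t in (f a)..m, (P (a, t) - P ((a, f a) : V2)))
            + (∫ t in m..c, (P (s, t) - P (a, t)))|
          ≤ |∫ t in (f s)..m, (P (s, t) - P ((a, f a) : V2))|
            + |∫ t in (f a)..m, (P (a, t) - P ((a, f a) : V2))|
            + |∫ t in m..c, (P (s, t) - P (a, t))| := by
        calc |(∫ t in (f s)..m, (P (s, t) - P ((a, f a) : V2)))
            - (∫ t in (f a)..m, (P (a, t) - P ((a, f a) : V2)))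
            + (∫ t in m..c, (P (s, t) - P (a, t)))|
            ≤ |(∫ t in (f s)..m, (P (s, t) - P ((a, f a) : V2)))
              - (∫ t in (f a)..m, (P (a, t) - P ((a, f a) : V2)))|
              + |∫ t in m..c, (P (s, t) - P (a, t))| := abs_add_le _ _
          _ ≤ _ := by
              have := abs_sub (∫ t in (f s)..m, (P (s, t) - P ((a, f a) : V2)))
                (∫ t in (f a)..m, (P (a, t) - P ((a, f a) : V2)))
              linarith
      have hfinish : ε₂ * (2 * (Lf * |s - a|)) + ε₂ * (Lf * |s - a|)
            + M₀ * (c - f a) * |s - a|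
          = (3 * Lf * ε₂ + M₀ * (c - f a)) * |s - a| := by ring
      linarith [hE1, hE2, hB, htri]
    -- pass to the limit
    have htend : Tendsto
        (fun s => |P ((a, f a) : V2) * slope f a s
          - slope (fun s => ∫ t in c..1, P (s, t)) a s|) (𝓝[≠] a)
        (𝓝 |P ((a, f a) : V2) * d - q0 c|) :=
      (((hasDerivAt_iff_tendsto_slope.mp hfd).const_mul _).sub
        (hasDerivAt_iff_tendsto_slope.mp hgC')).abs
    have hlim : |P ((a, f a) : V2) * d - q0 c| ≤ 3 * Lf * ε₂ + M₀ * (c - f a) :=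
      le_of_tendsto htend hKB
    have h3L : 3 * Lf * ε₂ ≤ ε / 8 := by
      have h1 : 3 * Lf * ε₂ ≤ (3 * Lf + 1) * ε₂ :=
        mul_le_mul_of_nonneg_right (by linarith) hε₂.le
      have h2 : (3 * Lf + 1) * ε₂ = ε / 8 := by
        rw [hε₂def]
        field_simp [show 3 * Lf + 1 ≠ 0 by linarith]
      linarith
    have htri2 : |P ((a, f a) : V2) * d - Q ((a, f a) : V2)|
        ≤ |P ((a, f a) : V2) * d - q0 c| + |q0 c - q0 (f a)| := by
      have h1 : q0 (f a) = Q ((a, f a) : V2) := by rw [hq0def]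
      rw [← h1]
      exact abs_sub_le _ _ _
    calc |P ((a, f a) : V2) * d - Q ((a, f a) : V2)|
        ≤ |P ((a, f a) : V2) * d - q0 c| + |q0 c - q0 (f a)| := htri2
      _ ≤ (3 * Lf * ε₂ + M₀ * (c - f a)) + ε / 2 := by linarith
      _ ≤ ε := by linarith
  have h0 : |P ((a, f a) : V2) * d - Q ((a, f a) : V2)| ≤ 0 :=
    le_of_forall_pos_le_add (fun ε hε => by simpa using hABS ε hε)
  exact sub_eq_zero.mp (abs_nonpos_iff.mp h0)

/-- **The mass-flux identity determines the free boundary ODE** (Step 1 of the proof of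
Lemma 4.4 in Bae–Park): if `(ρ*, u₁*, u₂*)` is `C¹` up to the boundary of `N⁺_{L,f}`,
satisfies the continuity equation there, `ρ*u₁* > 0`, the slip condition `ρ*u₂* = 0` on
`{x₂ = 1}`, and if `f : [0,L] → (-1,1)` is `C¹`, `f(0) = 0`, and the horizontal mass flux
through each section `{x₁} × (f(x₁), 1)` equals the flux through the entrance, then
`f'(x₁) = (u₂*/u₁*)(x₁, f(x₁))` for `0 < x₁ < L`. -/
theorem mass_flux_identity_gives_free_boundary_ode
    (L : ℝ) (hL : 0 < L) (f : ℝ → ℝ) (ρs u1s u2s : V2 → ℝ)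
    (hfC1 : ContDiffOn ℝ 1 f (Set.Icc 0 L))
    (hfrange : ∀ x₁ ∈ Set.Icc (0 : ℝ) L, f x₁ ∈ Set.Ioo (-1 : ℝ) 1)
    (hf0 : f 0 = 0)
    (hC1 : ContDiffOn ℝ 1 (fun x => (ρs x, u1s x, u2s x)) (closure (NozLF L f)))
    (hcont : ∀ x ∈ NozLF L f,
      pd1W (closure (NozLF L f)) (fun y => ρs y * u1s y) x
        + pd2W (closure (NozLF L f)) (fun y => ρs y * u2s y) x = 0)
    (hpos : ∀ x ∈ closure (NozLF L f), 0 < ρs x * u1s x)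
    (hslip : ∀ x₁ ∈ Set.Icc (0 : ℝ) L, ρs (x₁, (1 : ℝ)) * u2s (x₁, (1 : ℝ)) = 0)
    (hflux : ∀ x₁ ∈ Set.Icc (0 : ℝ) L,
      (∫ t in (0 : ℝ)..1, ρs ((0 : ℝ), t) * u1s ((0 : ℝ), t))
        = ∫ t in (f x₁)..1, ρs (x₁, t) * u1s (x₁, t)) :
    ∀ x₁ ∈ Set.Ioo (0 : ℝ) L,
      deriv f x₁ = u2s (x₁, f x₁) / u1s (x₁, f x₁) := by
  intro a ha
  have hopen : IsOpen (NozLF L f) := nozLF_isOpen L f hfC1.continuousOn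
  have hρ : ContDiffOn ℝ 1 ρs (closure (NozLF L f)) := contDiff_fst.comp_contDiffOn hC1
  have hu1 : ContDiffOn ℝ 1 u1s (closure (NozLF L f)) :=
    contDiff_fst.comp_contDiffOn (contDiff_snd.comp_contDiffOn hC1)
  have hu2 : ContDiffOn ℝ 1 u2s (closure (NozLF L f)) :=
    contDiff_snd.comp_contDiffOn (contDiff_snd.comp_contDiffOn hC1)
  have hPC1 : ContDiffOn ℝ 1 (fun y => ρs y * u1s y) (closure (NozLF L f)) := hρ.mul hu1
  have hQC1 : ContDiffOn ℝ 1 (fun y => ρs y * u2s y) (closure (NozLF L f)) := hρ.mul hu2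
  have hcont' : ∀ x ∈ NozLF L f,
      fderiv ℝ (fun y => ρs y * u1s y) x ((1 : ℝ), (0 : ℝ))
        + fderiv ℝ (fun y => ρs y * u2s y) x ((0 : ℝ), (1 : ℝ)) = 0 := by
    intro x hx
    have h1 := hcont x hx
    have hnh : closure (NozLF L f) ∈ 𝓝 x :=
      Filter.mem_of_superset (hopen.mem_nhds hx) subset_closure
    unfold pd1W pd2W at h1
    rw [fderivWithin_of_mem_nhds hnh, fderivWithin_of_mem_nhds hnh] at h1
    exact h1
  have hQtop : (fun y => ρs y * u2s y) ((a, (1 : ℝ)) : V2) = 0 :=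
    hslip a ⟨ha.1.le, ha.2.le⟩
  have key := aux_main L a f (fun y => ρs y * u1s y) (fun y => ρs y * u2s y)
    hfC1 hfrange hPC1 hQC1 hcont' hQtop hflux ha
  have key' : ρs (a, f a) * u1s (a, f a) * deriv f a
      = ρs (a, f a) * u2s (a, f a) := key
  have hfa := hfrange a ⟨ha.1.le, ha.2.le⟩
  have hpos' : 0 < ρs (a, f a) * u1s (a, f a) :=
    hpos (a, f a) (mem_closure_nozLF L f ha.1 ha.2 hfa.2 le_rfl hfa.2.le)
  have hρne : ρs (a, f a) ≠ 0 := left_ne_zero_of_mul hpos'.ne'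
  have hu1ne : u1s (a, f a) ≠ 0 := right_ne_zero_of_mul hpos'.ne'
  rw [eq_div_iff hu1ne]
  apply mul_left_cancel₀ hρne
  linear_combination key'
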